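/- Let (q_α, h_α, a_α, k₁^α, k₂^α) and (q_β, h_β, a_β, k₁^β, k₂^β) be two ruled-surface Frenet frames: q, h, a : ℝ → ℝ³ differentiable with ‖q‖ = ‖h‖ = 1, a = q × h, and q' = k₁ h, h' = −k₁ q + k₂ a, a' = −k₂ h, where k₁^α, k₁^β are positive. Let φ : ℝ → ℝ be differentiable with φ'(s) > 0 for all s, and suppose q_α(φ(s)) = q_β(s) for all s (the surfaces are similar). Then the ratios of curvatures agree, k₂^β(s)/k₁^β(s) = k₂^α(φ(s))/k₁^α(φ(s)) for all s, and the transformation keeps total curvatures equal in the sense that k₁^α(φ(s))·φ'(s) = k₁^β(s) for all s. -/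

import Mathlib

open Real

/-- Cross product on `EuclideanSpace ℝ (Fin 3)`. -/
noncomputable def cross3 (u v : EuclideanSpace ℝ (Fin 3)) : EuclideanSpace ℝ (Fin 3) :=
  WithLp.toLp 2 (crossProduct u v)

lemma inner_eq_dot (u v : EuclideanSpace ℝ (Fin 3)) :
    (inner ℝ u v : ℝ) = dotProduct (u : Fin 3 → ℝ) (v : Fin 3 → ℝ) := by
  simp [PiLp.inner_apply, dotProduct, mul_comm]

lemma cross3_ne_zero (u v : EuclideanSpace ℝ (Fin 3)) (hu : ‖u‖ = 1) (hv : ‖v‖ = 1)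
    (huv : (inner ℝ u v : ℝ) = 0) : cross3 u v ≠ 0 := by
  intro h
  have h1 : (inner ℝ (cross3 u v) (cross3 u v) : ℝ) = 0 := by rw [h]; simp
  rw [inner_eq_dot] at h1
  have h2 : dotProduct (cross3 u v : Fin 3 → ℝ) (cross3 u v : Fin 3 → ℝ) = 1 := by
    show dotProduct (crossProduct u v) (crossProduct u v) = 1
    rw [cross_dot_cross]
    rw [← inner_eq_dot, ← inner_eq_dot, ← inner_eq_dot, ← inner_eq_dot] at *
    rw [real_inner_self_eq_norm_sq, real_inner_self_eq_norm_sq, hu, hv, huv]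
    ring
  rw [h1] at h2
  norm_num at h2

/-- If two ruled surfaces are similar under a variable transformation φ, then the ratios
of their curvatures agree, `k₂^β/k₁^β = (k₂^α ∘ φ)/(k₁^α ∘ φ)`, and the transformation
keeps total curvatures equal: `(k₁^α ∘ φ) · φ' = k₁^β`. -/
theorem similar_ruled_surfaces_curvature_ratios_agree
    (qα hα aα qβ hβ aβ : ℝ → EuclideanSpace ℝ (Fin 3)) (k₁α k₂α k₁β k₂β : ℝ → ℝ)
    (hqα : Differentiable ℝ qα) (hhα : Differentiable ℝ hα) (haα : Differentiable ℝ aα)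
    (hqβ : Differentiable ℝ qβ) (hhβ : Differentiable ℝ hβ) (haβ : Differentiable ℝ aβ)
    (hqαn : ∀ t, ‖qα t‖ = 1) (hhαn : ∀ t, ‖hα t‖ = 1)
    (hqβn : ∀ s, ‖qβ s‖ = 1) (hhβn : ∀ s, ‖hβ s‖ = 1)
    (haαdef : ∀ t, aα t = cross3 (qα t) (hα t))
    (haβdef : ∀ s, aβ s = cross3 (qβ s) (hβ s))
    (hqα' : ∀ t, deriv qα t = k₁α t • hα t)
    (hhα' : ∀ t, deriv hα t = (-(k₁α t)) • qα t + k₂α t • aα t)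
    (haα' : ∀ t, deriv aα t = (-(k₂α t)) • hα t)
    (hqβ' : ∀ s, deriv qβ s = k₁β s • hβ s)
    (hhβ' : ∀ s, deriv hβ s = (-(k₁β s)) • qβ s + k₂β s • aβ s)
    (haβ' : ∀ s, deriv aβ s = (-(k₂β s)) • hβ s)
    (hk₁α : ∀ t, 0 < k₁α t) (hk₁β : ∀ s, 0 < k₁β s)
    (φ : ℝ → ℝ) (hφ : Differentiable ℝ φ) (hφ' : ∀ s, 0 < deriv φ s)
    (hsim : ∀ s, qα (φ s) = qβ s) :
    (∀ s, k₂β s / k₁β s = k₂α (φ s) / k₁α (φ s)) ∧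
      (∀ s, k₁α (φ s) * deriv φ s = k₁β s) := by
  -- Step A: chain rule for qα ∘ φ = qβ
  have stepA : ∀ s, (deriv φ s * k₁α (φ s)) • hα (φ s) = k₁β s • hβ s := by
    intro s
    have h1 : HasDerivAt qα (k₁α (φ s) • hα (φ s)) (φ s) := by
      have := (hqα (φ s)).hasDerivAt
      rwa [hqα'] at this
    have h2 := h1.scomp s (hφ s).hasDerivAt
    have hcomp : qα ∘ φ = qβ := funext hsim
    rw [hcomp] at h2
    have := h2.deriv
    rw [hqβ'] at this
    rw [this, smul_smul]
  -- Step B: total curvature equality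
  have stepB : ∀ s, k₁α (φ s) * deriv φ s = k₁β s := by
    intro s
    have h := congrArg norm (stepA s)
    rw [norm_smul, norm_smul, hhαn, hhβn, Real.norm_eq_abs, Real.norm_eq_abs,
      abs_of_pos (mul_pos (hφ' s) (hk₁α (φ s))), abs_of_pos (hk₁β s)] at h
    linarith [h]
  -- Step C: hβ s = hα (φ s)
  have stepC : ∀ s, hα (φ s) = hβ s := by
    intro s
    have h := stepA s
    rw [mul_comm, stepB s] at h
    exact smul_right_injective _ (ne_of_gt (hk₁β s)) h
  -- Step D: aα (φ s) = aβ s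
  have stepD : ∀ s, aα (φ s) = aβ s := by
    intro s
    rw [haαdef, haβdef, hsim, stepC]
  -- Step F: orthogonality of qβ and hβ
  have stepF : ∀ s, (inner ℝ (qβ s) (hβ s) : ℝ) = 0 := by
    intro s
    have hq : HasDerivAt qβ (k₁β s • hβ s) s := by
      have := (hqβ s).hasDerivAt
      rwa [hqβ'] at this
    have hi : HasDerivAt (fun t => (inner ℝ (qβ t) (qβ t) : ℝ))
        ((inner ℝ (qβ s) (k₁β s • hβ s) : ℝ) + (inner ℝ (k₁β s • hβ s) (qβ s) : ℝ)) s :=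
      hq.inner ℝ hq
    have hconst : (fun t => (inner ℝ (qβ t) (qβ t) : ℝ)) = fun _ => 1 := by
      funext t
      rw [real_inner_self_eq_norm_sq, hqβn]; norm_num
    rw [hconst] at hi
    have h0 := hi.deriv
    rw [deriv_const] at h0
    rw [real_inner_smul_left, real_inner_smul_right, real_inner_comm (hβ s) (qβ s)] at h0
    have h3 : k₁β s * (inner ℝ (hβ s) (qβ s) : ℝ) = 0 := by linarith
    rw [real_inner_comm]
    exact (mul_eq_zero.mp h3).resolve_left (ne_of_gt (hk₁β s))
  -- Step E: chain rule for hα ∘ φ = hβ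
  have stepE : ∀ s, deriv φ s * k₂α (φ s) = k₂β s := by
    intro s
    have h1 : HasDerivAt hα ((-(k₁α (φ s))) • qα (φ s) + k₂α (φ s) • aα (φ s)) (φ s) := by
      have := (hhα (φ s)).hasDerivAt
      rwa [hhα'] at this
    have h2 := h1.scomp s (hφ s).hasDerivAt
    have hcomp : hα ∘ φ = hβ := funext stepC
    rw [hcomp] at h2
    have heq := h2.deriv
    rw [hhβ'] at heq
    rw [hsim, stepD, smul_add, smul_smul, smul_smul] at heq
    have hq : deriv φ s * -(k₁α (φ s)) = -(k₁β s) := by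
      have := stepB s; nlinarith [this]
    rw [hq] at heq
    have hcancel : (deriv φ s * k₂α (φ s)) • aβ s = k₂β s • aβ s := by
      exact (add_left_cancel heq).symm
    have hne : aβ s ≠ 0 := by
      rw [haβdef]
      exact cross3_ne_zero _ _ (hqβn s) (hhβn s) (stepF s)
    by_contra hcon
    have : (deriv φ s * k₂α (φ s) - k₂β s) • aβ s = 0 := by
      rw [sub_smul, hcancel, sub_self]
    rcases smul_eq_zero.mp this with h | h
    · exact hcon (by linarith [sub_eq_zero.mp (by linarith [h] : deriv φ s * k₂α (φ s) - k₂β s = 0)])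
    · exact hne h
  refine ⟨fun s => ?_, stepB⟩
  rw [← stepB s, ← stepE s]
  have hφne : deriv φ s ≠ 0 := ne_of_gt (hφ' s)
  rw [mul_comm (deriv φ s) (k₂α (φ s)), mul_div_mul_right _ _ hφne]
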